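/- VPC-SD is in NP: given a trace of n operations over a single variable, if there exists a legal schedule of the visible operations (all writes plus p₀'s reads) respecting program order, then there exists one of length at most n that can be verified legal by a single scan in polynomial time; hence PRAM consistency for such traces is decidable in nondeterministic polynomial time. -/

import Mathlib

/-- An operation: a read or write on variable `var` with value `val` (the issuing
process is given by the position of the operation in the trace). -/
structure Op where
  isRead : Bool
  var : ℕ
  val : ℕ
deriving DecidableEq

/-- Write of value `v` to the single shared variable `x` (variable `0`). -/
def Wr (v : ℕ) : Op := ⟨false, 0, v⟩

/-- Read of value `v` from the single shared variable `x` (variable `0`). -/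
def Rd (v : ℕ) : Op := ⟨true, 0, v⟩

/-- Values `a, a', b, b', c, c'` are the six distinct integers `1,…,6`. -/
def va : ℕ := 1
def va' : ℕ := 2
def vb : ℕ := 3
def vb' : ℕ := 4
def vc : ℕ := 5
def vc' : ℕ := 6

/-- Open subsequence `Rxa Rxa' Rxa Rxa' Rxa Rxa'`. -/
def openSeq : List Op := [Rd va, Rd va', Rd va, Rd va', Rd va, Rd va']

/-- Sum subsequence `(Rxb Rxb')^B`. -/
def sumSeq (B : ℕ) : List Op := (List.replicate B [Rd vb, Rd vb']).flatten

/-- Close subsequence `Rxc Rxc' Rxc Rxc' Rxc Rxc'`. -/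
def closeSeq : List Op := [Rd vc, Rd vc', Rd vc, Rd vc', Rd vc, Rd vc']

/-- The read-only process `P₀`: `m` slot sequences. -/
def P0 (m B : ℕ) : List Op := (List.replicate m (openSeq ++ sumSeq B ++ closeSeq)).flatten

/-- Process `P_{aᵢ}`: `Wxa'`, then `s(aᵢ)` copies of `Wxb'`, then `Wxc'`. -/
def Pa (sz : ℕ) : List Op := Wr va' :: (List.replicate sz (Wr vb') ++ [Wr vc'])

/-- The trace of the reduction from Unary 3-Partition: `P₀`, the processes
`P_{a₁},…,P_{a_{3m}}`, and the auxiliary processes `P_{c₁} = (Wxa)^{3m}`,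
`P_{c₂} = (Wxb)^{mB}`, `P_{c₃} = (Wxc)^{3m}`. -/
def reductionTrace (m B : ℕ) (s : Fin (3 * m) → ℕ) : List (List Op) :=
  P0 m B :: (List.ofFn (fun i => Pa (s i)) ++
    [List.replicate (3 * m) (Wr va), List.replicate (m * B) (Wr vb),
     List.replicate (3 * m) (Wr vc)])

/-- A position of an operation in a trace: a process index and an index in that
process's sequence. -/
def Pos (procs : List (List Op)) : Type := Σ i : Fin procs.length, Fin ((procs.get i).length)

/-- The operation at a position of the trace. -/
def opAt {procs : List (List Op)} (p : Pos procs) : Op := (procs.get p.1).get p.2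

/-- `σ` numbers the operations of the trace as a legal schedule respecting program
order: it is injective, operations of the same process keep their order, and every
read reads the value of the latest preceding write on the same variable. -/
def LegalSched (procs : List (List Op)) (σ : Pos procs → ℕ) : Prop :=
  Function.Injective σ ∧
  (∀ p q : Pos procs, p.1.val = q.1.val → p.2.val < q.2.val → σ p < σ q) ∧
  (∀ p : Pos procs, (opAt p).isRead = true →
    ∃ q : Pos procs, (opAt q).isRead = false ∧ σ q < σ p ∧
      (opAt q).var = (opAt p).var ∧ (opAt q).val = (opAt p).val ∧
      ∀ q' : Pos procs, (opAt q').isRead = false → (opAt q').var = (opAt p).var →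
        σ q < σ q' → ¬ σ q' < σ p)

/-- A solution of the 3-Partition instance: an assignment of the `3m` elements to `m`
triples, each summing to `B`. -/
def ThreePartSol (m B : ℕ) (s : Fin (3 * m) → ℕ) : Prop :=
  ∃ f : Fin (3 * m) → Fin m,
    (∀ j : Fin m, (Finset.univ.filter (fun i => f i = j)).card = 3) ∧
    (∀ j : Fin m, ∑ i ∈ Finset.univ.filter (fun i => f i = j), s i = B)

/-- VPC-SD is in NP (witness bounding): for a single-variable trace whose reads all
belong to process `p₀` (so its visible operations are all operations), if some legal
schedule respecting program order exists, then one exists whose numbering takes values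
in `Fin n` where `n` is the total number of operations of the trace; such a schedule
can be checked for legality by a single scan. -/
theorem stmt9 (procs : List (List Op))
    (hsingle : ∀ p : Pos procs, (opAt p).var = 0)
    (hreads : ∀ p : Pos procs, (opAt p).isRead = true → p.1.val = 0) :
    (∃ σ : Pos procs → ℕ, LegalSched procs σ) →
    ∃ σ' : Pos procs → Fin ((procs.map List.length).sum),
      Function.Injective σ' ∧ LegalSched procs (fun p => (σ' p).val) := by
  rintro ⟨σ, hinj, hpo, hleg⟩
  have E : Pos procs ≃ (Σ i : Fin procs.length, Fin ((procs.get i).length)) :=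
    Equiv.cast (by rfl)
  haveI : Fintype (Pos procs) := Fintype.ofEquiv _ E.symm
  have hcard : Fintype.card (Pos procs) = (procs.map List.length).sum := by
    rw [Fintype.card_congr E, Fintype.card_sigma]
    simp only [Fintype.card_fin]
    rw [← Fin.sum_univ_getElem (procs.map List.length)]
    apply Finset.sum_nbij' (fun i => Fin.cast (by simp) i) (fun i => Fin.cast (by simp) i)
      <;> simp
  set s : Finset ℕ := Finset.univ.image σ with hs
  have hscard : s.card = (procs.map List.length).sum := by
    rw [hs, Finset.card_image_of_injective _ hinj, Finset.card_univ, hcard]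
  let e := s.orderIsoOfFin hscard
  let σ' : Pos procs → Fin ((procs.map List.length).sum) :=
    fun p => e.symm ⟨σ p, by rw [hs]; exact Finset.mem_image_of_mem σ (Finset.mem_univ p)⟩
  have hlt : ∀ p q, (σ' p).val < (σ' q).val ↔ σ p < σ q := by
    intro p q
    have : σ' p < σ' q ↔ σ p < σ q := by
      simp only [σ', e.symm.lt_iff_lt, Subtype.mk_lt_mk]
    rw [← this]; rfl
  have hinj' : Function.Injective σ' := by
    intro p q h
    apply hinj
    have h1 : ¬ σ p < σ q := by rw [← hlt]; simp [h]
    have h2 : ¬ σ q < σ p := by rw [← hlt]; simp [h]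
    omega
  refine ⟨σ', hinj', fun p q h => by simpa using hinj' (Fin.val_injective h), ?_, ?_⟩
  · intro p q h1 h2
    rw [hlt]; exact hpo p q h1 h2
  · intro p hp
    obtain ⟨q, hq1, hq2, hq3, hq4, hq5⟩ := hleg p hp
    exact ⟨q, hq1, (hlt q p).2 hq2, hq3, hq4, fun q' a b h1 h2 =>
      hq5 q' a b ((hlt q q').1 h1) ((hlt q' p).1 h2)⟩
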